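/- Let m be a positive integer with gcd(m,q) = 1, a an integer with gcd(a,m) = 1, and C = F_q[x]·c(x) the 1-generator QC code of index l generated by c(x) = (c_1(x),...,c_l(x)) ∈ (F_q[x]/(x^m−1))^l. Let a' be the residue of −a modulo m. Then C is μ_a-LCD if and only if gcd(Σ_{j=1}^l c_j(x)·c_j(x^{a'}), x^m−1) = gcd(c_1(x),...,c_l(x), x^m−1) (monic polynomial gcds in F_q[x], computing c_j(x^{a'}) modulo x^m−1), and C is μ_a self-orthogonal if and only if Σ_{j=1}^l c_j(x)·c_j(x^{a'}) ≡ 0 (mod x^m−1). -/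

import Mathlib

open scoped BigOperators
open Polynomial


/-- The Euclidean dual of a linear code inside `(F[x]/(x^m - 1))^l`, each factor being
identified with `F^m` (coordinates indexed by `ZMod m`) via coefficient vectors. -/
def qcDual {F : Type*} [Field F] {l m : ℕ} [NeZero m]
    (C : Submodule F (Fin l → ZMod m → F)) : Submodule F (Fin l → ZMod m → F) where
  carrier := {b | ∀ c ∈ C, ∑ j, ∑ i, b j i * c j i = 0}
  zero_mem' := by intro c hc; simp
  add_mem' := by
    intro x y hx hy c hc
    simp only [Set.mem_setOf_eq, Pi.add_apply, add_mul, Finset.sum_add_distrib,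
      hx c hc, hy c hc, add_zero]
  smul_mem' := by
    intro r x hx c hc
    simp only [Set.mem_setOf_eq, Pi.smul_apply, smul_eq_mul, mul_assoc,
      ← Finset.mul_sum, hx c hc, mul_zero]

/-- The coordinate permutation `μ_a` of `(F[x]/(x^m - 1))^l`, sending each component
`c_j(x)` to `c_j(x^a) mod (x^m - 1)`; on coefficient vectors the coefficient of `x^i`
of the image of `c_j` is the coefficient of `x^(a⁻¹ i)` of `c_j`. -/
def muQC {F : Type*} [Field F] (l m : ℕ) (a : ℤ) :
    (Fin l → ZMod m → F) →ₗ[F] (Fin l → ZMod m → F) where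
  toFun c := fun j i => c j (((a : ZMod m))⁻¹ * i)
  map_add' := fun _ _ => rfl
  map_smul' := fun _ _ => rfl

/-- The coefficient vector (indexed by `ZMod m`) of a polynomial of degree `< m`,
identifying `F[x]/(x^m - 1)` with `F^m`. -/
def polyToVec {F : Type*} [Field F] (m : ℕ) [NeZero m] (p : Polynomial F) : ZMod m → F :=
  fun i => p.coeff i.val

/-- The 1-generator quasi-cyclic code of index `l` generated by
`c = (c_1(x), …, c_l(x)) ∈ (F[x]/(x^m - 1))^l`, namely
`F_q[x]·c = {(p c_1 mod (x^m-1), …, p c_l mod (x^m-1)) : p ∈ F_q[x]}`. -/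
def oneGenQC {F : Type*} [Field F] (m l : ℕ) [NeZero m] (c : Fin l → Polynomial F) :
    Submodule F (Fin l → ZMod m → F) :=
  Submodule.span F
    {v | ∃ p : Polynomial F, v = fun j => polyToVec m ((p * c j) % (X ^ m - 1))}


namespace QCAux
variable {F : Type*} [Field F] {m : ℕ} [NeZero m]

theorem monicN : (X ^ m - 1 : F[X]).Monic := by
  simpa using monic_X_pow_sub_C (1 : F) (NeZero.ne m)

theorem degN : (X ^ m - 1 : F[X]).degree = m := by
  simpa using degree_X_pow_sub_C (Nat.pos_of_ne_zero (NeZero.ne m)) (1 : F)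

theorem NneZero : (X ^ m - 1 : F[X]) ≠ 0 := (monicN).ne_zero

theorem modN_eq (p : F[X]) : p % (X ^ m - 1) = p %ₘ (X ^ m - 1) := by
  rw [Polynomial.mod_def, (monicN (m := m)).leadingCoeff, inv_one, map_one, mul_one]

theorem dvd_sub_modN (p : F[X]) : (X ^ m - 1 : F[X]) ∣ p - p %ₘ (X ^ m - 1) := by
  rw [modByMonic_eq_sub_mul_div p (X ^ m - 1), sub_sub_cancel]
  exact dvd_mul_right _ _

theorem modN_congr {p q : F[X]} (h : (X ^ m - 1 : F[X]) ∣ p - q) :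
    p %ₘ (X ^ m - 1) = q %ₘ (X ^ m - 1) := by
  have h0 : (p - q) %ₘ (X ^ m - 1) = 0 := (modByMonic_eq_zero_iff_dvd (monicN)).mpr h
  rw [sub_modByMonic] at h0
  exact sub_eq_zero.mp h0

theorem Xpow_modN (e : ℕ) : ((X : F[X]) ^ e) %ₘ (X ^ m - 1) = X ^ (e % m) := by
  have hm : 0 < m := Nat.pos_of_ne_zero (NeZero.ne m)
  have hdvd : (X ^ m - 1 : F[X]) ∣ X ^ e - X ^ (e % m) := by
    have h1 : (X ^ m - 1 : F[X]) ∣ (X ^ m) ^ (e / m) - 1 := by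
      simpa using sub_dvd_pow_sub_pow (X ^ m : F[X]) 1 (e / m)
    have h2 : (X : F[X]) ^ e - X ^ (e % m) = X ^ (e % m) * ((X ^ m) ^ (e / m) - 1) := by
      rw [mul_sub, mul_one, ← pow_mul, ← pow_add]
      rw [Nat.mod_add_div]
    rw [h2]
    exact Dvd.dvd.mul_left h1 _
  rw [modN_congr hdvd]
  refine (modByMonic_eq_self_iff (monicN)).mpr ?_
  rw [degN, degree_X_pow]
  exact_mod_cast Nat.mod_lt e hm

theorem Xpow_sub_Xpow_dvd {b c : ℕ} (h : (b : ZMod m) = (c : ZMod m)) :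
    (X ^ m - 1 : F[X]) ∣ X ^ b - X ^ c := by
  rw [← modByMonic_eq_zero_iff_dvd (monicN), sub_modByMonic, Xpow_modN, Xpow_modN,
    (ZMod.natCast_eq_natCast_iff' b c m).mp h, sub_self]

theorem monomial_modN (t : ℕ) (β : F) :
    (monomial t β : F[X]) %ₘ (X ^ m - 1) = β • (X : F[X]) ^ (t % m) := by
  rw [← C_mul_X_pow_eq_monomial, ← smul_eq_C_mul, smul_modByMonic, Xpow_modN]

/-- the "constant term mod `X^m - 1`" functional. -/
noncomputable def ctL (F : Type*) [Field F] (m : ℕ) [NeZero m] : F[X] →ₗ[F] F where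
  toFun p := (p %ₘ (X ^ m - 1)).coeff 0
  map_add' p q := by rw [add_modByMonic, coeff_add]
  map_smul' r p := by rw [smul_modByMonic, coeff_smul]; simp

theorem ctL_congr {p q : F[X]} (h : (X ^ m - 1 : F[X]) ∣ p - q) : ctL F m p = ctL F m q := by
  show (p %ₘ _).coeff 0 = (q %ₘ _).coeff 0
  rw [modN_congr h]

theorem ctL_of_dvd {p : F[X]} (h : (X ^ m - 1 : F[X]) ∣ p) : ctL F m p = 0 := by
  show (p %ₘ _).coeff 0 = 0
  rw [(modByMonic_eq_zero_iff_dvd (monicN)).mpr h, coeff_zero]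

theorem ctL_monomial (t : ℕ) (β : F) :
    ctL F m (monomial t β) = if (t : ZMod m) = 0 then β else 0 := by
  show ((monomial t β : F[X]) %ₘ _).coeff 0 = _
  rw [monomial_modN, coeff_smul, coeff_X_pow, smul_eq_mul]
  have : (t : ZMod m) = 0 ↔ t % m = 0 := by
    rw [ZMod.natCast_eq_zero_iff, Nat.dvd_iff_mod_eq_zero]
  by_cases h : t % m = 0 <;> simp [h, this, eq_comm]

theorem coeff_mod_eq_ct (p : F[X]) (i : ZMod m) :
    (p %ₘ (X ^ m - 1)).coeff i.val = ctL F m (X ^ (m - i.val) * p) := by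
  induction p using Polynomial.induction_on' with
  | add p q hp hq => rw [add_modByMonic, coeff_add, hp, hq, mul_add, map_add]
  | monomial t α =>
      rw [monomial_modN, coeff_smul, coeff_X_pow, smul_eq_mul]
      have hXmul : (X : F[X]) ^ (m - i.val) * monomial t α = monomial (m - i.val + t) α := by
        rw [← C_mul_X_pow_eq_monomial, ← C_mul_X_pow_eq_monomial]; ring
      rw [hXmul, ctL_monomial]
      have hle : i.val ≤ m := le_of_lt (ZMod.val_lt i)
      have hv : ((i.val : ℕ) : ZMod m) = i := ZMod.natCast_rightInverse i
      have h1 : ((m - i.val : ℕ) : ZMod m) = -(i : ZMod m) := by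
        refine eq_neg_of_add_eq_zero_left ?_
        have h2 : ((m - i.val : ℕ) : ZMod m) + ((i.val : ℕ) : ZMod m) = 0 := by
          rw [← Nat.cast_add, Nat.sub_add_cancel hle, ZMod.natCast_self]
        rwa [hv] at h2
      have hcast : ((m - i.val + t : ℕ) : ZMod m) = 0 ↔ (t : ZMod m) = i := by
        rw [Nat.cast_add, h1]
        exact ⟨fun hh => (neg_add_eq_zero.mp hh).symm, fun hh => neg_add_eq_zero.mpr hh.symm⟩
      have hval : i.val = t % m ↔ (t : ZMod m) = i := by
        rw [← ZMod.val_natCast]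
        exact ⟨fun h => (ZMod.val_injective m h.symm), fun h => by rw [h]⟩
      by_cases h : (t : ZMod m) = i
      · rw [if_pos (hcast.mpr h), if_pos (hval.mpr h), mul_one]
      · rw [if_neg (fun hc => h (hcast.mp hc)), if_neg (fun hc => h (hval.mp hc)), mul_zero]

theorem modN_eq_zero_of_vec (p : F[X])
    (h : ∀ i : ZMod m, (p %ₘ (X ^ m - 1)).coeff i.val = 0) : p %ₘ (X ^ m - 1) = 0 := by
  ext k
  rw [coeff_zero]
  by_cases hk : k < m
  · have := h (k : ZMod m)
    rwa [ZMod.val_natCast, Nat.mod_eq_of_lt hk] at this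
  · refine coeff_eq_zero_of_degree_lt (lt_of_lt_of_le (degree_modByMonic_lt p (monicN)) ?_)
    rw [degN]
    exact_mod_cast le_of_not_gt hk

theorem dvd_of_forall_ctL {p : F[X]} (h : ∀ r : F[X], ctL F m (r * p) = 0) :
    (X ^ m - 1 : F[X]) ∣ p := by
  rw [← modByMonic_eq_zero_iff_dvd (monicN)]
  apply modN_eq_zero_of_vec
  intro i
  rw [coeff_mod_eq_ct]
  exact h _

theorem comp_congr {e e' : ℕ} (h : (e : ZMod m) = (e' : ZMod m)) (r : F[X]) :
    (X ^ m - 1 : F[X]) ∣ r.comp (X ^ e) - r.comp (X ^ e') := by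
  induction r using Polynomial.induction_on' with
  | add p q hp hq =>
      rw [add_comp, add_comp]
      have : p.comp (X ^ e) + q.comp (X ^ e) - (p.comp (X ^ e') + q.comp (X ^ e'))
          = (p.comp (X ^ e) - p.comp (X ^ e')) + (q.comp (X ^ e) - q.comp (X ^ e')) := by ring
      rw [this]
      exact dvd_add hp hq
  | monomial t α =>
      rw [monomial_comp, monomial_comp, ← pow_mul, ← pow_mul, ← mul_sub]
      refine Dvd.dvd.mul_left (Xpow_sub_Xpow_dvd ?_) _
      push_cast
      rw [h]

theorem mul_modN_dvd (p q : F[X]) :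
    (X ^ m - 1 : F[X]) ∣ p * q - p * (q %ₘ (X ^ m - 1)) := by
  rw [← mul_sub]
  exact Dvd.dvd.mul_left (dvd_sub_modN q) _

theorem sum_coeff_mul (a : ℤ) (hu : IsUnit ((a : ZMod m))) (a' : ℕ)
    (haa' : ((a' : ℕ) : ZMod m) = -(a : ZMod m)) (f g : F[X]) :
    ∑ i : ZMod m, (f %ₘ (X ^ m - 1)).coeff i.val *
        (g %ₘ (X ^ m - 1)).coeff ((((a : ℤ) : ZMod m))⁻¹ * i).val
      = ctL F m (f * g.comp (X ^ a')) := by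
  induction f using Polynomial.induction_on' with
  | add p q hp hq =>
      rw [add_modByMonic]
      simp only [coeff_add, add_mul]
      rw [Finset.sum_add_distrib, hp, hq, ← map_add, ← add_mul]
  | monomial s α =>
    induction g using Polynomial.induction_on' with
    | add p q hp hq =>
        rw [add_modByMonic]
        simp only [coeff_add, mul_add]
        rw [Finset.sum_add_distrib, hp, hq, ← map_add, ← mul_add, ← add_comp]
    | monomial t β =>
        rw [monomial_modN, monomial_modN]
        have hRHS : (monomial s α : F[X]) * (monomial t β).comp (X ^ a')
            = monomial (s + a' * t) (α * β) := by
          rw [monomial_comp, ← pow_mul, ← C_mul_X_pow_eq_monomial, ← C_mul_X_pow_eq_monomial,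
            C_mul, pow_add]
          ring
        rw [hRHS, ctL_monomial]
        set u : ZMod m := (((a : ℤ) : ZMod m))⁻¹ with hu_def
        have hmul1 : ((a : ℤ) : ZMod m) * u = 1 := ZMod.mul_inv_of_unit _ hu
        have hmul2 : u * ((a : ℤ) : ZMod m) = 1 := ZMod.inv_mul_of_unit _ hu
        have hterm : ∀ i : ZMod m,
            (α • (X : F[X]) ^ (s % m)).coeff i.val *
              (β • (X : F[X]) ^ (t % m)).coeff (u * i).val
            = if i = (s : ZMod m) then
                α * ((β • (X : F[X]) ^ (t % m)).coeff (u * (s : ZMod m)).val) else 0 := by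
          intro i
          by_cases hi : i = (s : ZMod m)
          · subst hi
            rw [if_pos rfl, coeff_smul, coeff_X_pow, if_pos (ZMod.val_natCast m s),
              smul_eq_mul, mul_one]
          · rw [if_neg hi, coeff_smul, coeff_X_pow, smul_eq_mul, if_neg, mul_zero, zero_mul]
            intro hc
            exact hi (ZMod.val_injective m ((ZMod.val_natCast m s).trans hc.symm)).symm
        rw [Finset.sum_congr rfl fun i _ => hterm i,
          Finset.sum_ite_eq' Finset.univ ((s : ZMod m)) _, if_pos (Finset.mem_univ _),
          coeff_smul, coeff_X_pow, smul_eq_mul]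
        have hiff : (u * (s : ZMod m)).val = t % m ↔ ((s + a' * t : ℕ) : ZMod m) = 0 := by
          rw [← ZMod.val_natCast]
          have hA : (u * (s : ZMod m)).val = (t : ZMod m).val ↔
              (t : ZMod m) = u * (s : ZMod m) :=
            ⟨fun h => (ZMod.val_injective m h).symm, fun h => by rw [h]⟩
          rw [hA]
          push_cast
          rw [haa']
          constructor
          · intro h
            have hs : ((a : ℤ) : ZMod m) * (u * (s : ZMod m)) = (s : ZMod m) := by
              rw [← mul_assoc, hmul1, one_mul]
            rw [h, neg_mul, hs, add_neg_cancel]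
          · intro hs
            have h2 : (s : ZMod m) = ((a : ℤ) : ZMod m) * (t : ZMod m) := by
              linear_combination hs
            rw [h2, ← mul_assoc, hmul2, one_mul]
        by_cases h : (u * (s : ZMod m)).val = t % m
        · rw [if_pos h, if_pos (hiff.mp h), mul_one]
        · rw [if_neg h, if_neg (fun hc => h (hiff.mpr hc)), mul_zero, mul_zero]

variable (F m) in
/-- The generator linear map whose range is the 1-generator QC code. -/
noncomputable def genMap (l : ℕ) (c : Fin l → F[X]) : F[X] →ₗ[F] (Fin l → ZMod m → F) where
  toFun p := fun j => polyToVec m ((p * c j) % (X ^ m - 1))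
  map_add' p q := by
    funext j i
    simp only [polyToVec, modN_eq, add_mul, add_modByMonic, coeff_add, Pi.add_apply]
  map_smul' r p := by
    funext j i
    simp only [polyToVec, modN_eq, smul_mul_assoc, smul_modByMonic, coeff_smul,
      Pi.smul_apply, RingHom.id_apply, smul_eq_mul]

theorem genMap_apply {l : ℕ} (c : Fin l → F[X]) (p : F[X]) (j : Fin l) (i : ZMod m) :
    genMap F m l c p j i = ((p * c j) %ₘ (X ^ m - 1)).coeff i.val := by
  rw [genMap]
  show polyToVec m ((p * c j) % (X ^ m - 1)) i = _
  rw [polyToVec, modN_eq]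

theorem mem_oneGenQC {l : ℕ} {c : Fin l → F[X]} {v : Fin l → ZMod m → F} :
    v ∈ oneGenQC m l c ↔ ∃ p : F[X], v = genMap F m l c p := by
  have hset : {v : Fin l → ZMod m → F | ∃ p : F[X],
      v = fun j => polyToVec m ((p * c j) % (X ^ m - 1))}
      = (LinearMap.range (genMap F m l c) : Set (Fin l → ZMod m → F)) := by
    ext w
    simp only [Set.mem_setOf_eq, SetLike.mem_coe, LinearMap.mem_range]
    exact ⟨fun ⟨p, hp⟩ => ⟨p, hp.symm⟩, fun ⟨p, hp⟩ => ⟨p, hp.symm⟩⟩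
  rw [oneGenQC, hset, Submodule.span_eq, LinearMap.mem_range]
  exact exists_congr fun p => eq_comm

theorem genMap_eq_zero_iff {l : ℕ} {c : Fin l → F[X]} {p : F[X]} :
    genMap F m l c p = 0 ↔ ∀ j, (X ^ m - 1 : F[X]) ∣ p * c j := by
  constructor
  · intro h j
    rw [← modByMonic_eq_zero_iff_dvd (monicN)]
    apply modN_eq_zero_of_vec
    intro i
    have := congrFun (congrFun h j) i
    rwa [genMap_apply] at this
  · intro h
    funext j i
    rw [Pi.zero_apply, Pi.zero_apply, genMap_apply,
      (modByMonic_eq_zero_iff_dvd (monicN)).mpr (h j), coeff_zero]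

theorem pairing_eq {l : ℕ} (c : Fin l → F[X]) (a : ℤ) (hu : IsUnit (((a : ℤ) : ZMod m)))
    (a' : ℕ) (haa' : ((a' : ℕ) : ZMod m) = -((a : ℤ) : ZMod m)) (p q : F[X]) :
    ∑ j, ∑ i, genMap F m l c p j i * (muQC l m a (genMap F m l c q)) j i
      = ctL F m (p * q.comp (X ^ a') *
          (∑ j, c j * ((c j).comp (X ^ a') % (X ^ m - 1)))) := by
  have hj : ∀ j : Fin l, ∑ i, genMap F m l c p j i * (muQC l m a (genMap F m l c q)) j i
      = ctL F m ((p * c j) * (q * c j).comp (X ^ a')) := by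
    intro j
    have := sum_coeff_mul a hu a' haa' (p * c j) (q * c j)
    rw [← this]
    refine Finset.sum_congr rfl fun i _ => ?_
    rw [genMap_apply]
    congr 1
    show genMap F m l c q j (((a : ℤ) : ZMod m)⁻¹ * i) = _
    rw [genMap_apply]
  rw [Finset.sum_congr rfl fun j _ => hj j, ← map_sum]
  apply ctL_congr
  rw [Finset.mul_sum, ← Finset.sum_sub_distrib]
  apply Finset.dvd_sum
  intro j _
  have h1 : (p * c j) * (q * c j).comp (X ^ a')
      - p * q.comp (X ^ a') * (c j * ((c j).comp (X ^ a') % (X ^ m - 1)))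
      = (p * c j * q.comp (X ^ a')) * ((c j).comp (X ^ a')
          - ((c j).comp (X ^ a') %ₘ (X ^ m - 1))) := by
    rw [mul_comp, modN_eq]
    ring
  rw [h1]
  exact Dvd.dvd.mul_left (dvd_sub_modN _) _

theorem genMap_mem_dual_iff {l : ℕ} (c : Fin l → F[X]) (a : ℤ)
    (hu : IsUnit (((a : ℤ) : ZMod m)))
    (a' : ℕ) (haa' : ((a' : ℕ) : ZMod m) = -((a : ℤ) : ZMod m)) (p : F[X]) :
    genMap F m l c p ∈ qcDual ((oneGenQC m l c).map (muQC l m a)) ↔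
      (X ^ m - 1 : F[X]) ∣ p * (∑ j, c j * ((c j).comp (X ^ a') % (X ^ m - 1))) := by
  set T := ∑ j, c j * ((c j).comp (X ^ a') % (X ^ m - 1)) with hT
  have hmem : genMap F m l c p ∈ qcDual ((oneGenQC m l c).map (muQC l m a)) ↔
      ∀ w ∈ (oneGenQC m l c).map (muQC l m a),
        ∑ j, ∑ i, genMap F m l c p j i * w j i = 0 := Iff.rfl
  rw [hmem]
  constructor
  · intro h
    apply dvd_of_forall_ctL
    intro r
    have hu' : IsUnit ((a' : ZMod m)) := by rw [haa']; exact hu.neg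
    set a'' : ℕ := ((a' : ZMod m)⁻¹).val with ha''
    set q : F[X] := r.comp (X ^ a'') with hq
    have hcomp : (X ^ m - 1 : F[X]) ∣ q.comp (X ^ a') - r := by
      rw [hq, comp_assoc, X_pow_comp, ← pow_mul]
      have hc1 : ((a' * a'' : ℕ) : ZMod m) = ((1 : ℕ) : ZMod m) := by
        push_cast
        rw [ha'', ZMod.natCast_val, ZMod.cast_id, ZMod.mul_inv_of_unit _ hu']
      have := comp_congr hc1 r
      simpa [pow_one] using this
    have hw : muQC l m a (genMap F m l c q) ∈ (oneGenQC m l c).map (muQC l m a) :=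
      Submodule.mem_map_of_mem (mem_oneGenQC.mpr ⟨q, rfl⟩)
    have h0 := h _ hw
    rw [pairing_eq c a hu a' haa'] at h0
    have heq : ctL F m (r * (p * T)) = ctL F m (p * q.comp (X ^ a') * T) := by
      apply ctL_congr
      have hfac : r * (p * T) - p * q.comp (X ^ a') * T
          = (p * T) * (r - q.comp (X ^ a')) := by ring
      rw [hfac]
      exact Dvd.dvd.mul_left (dvd_sub_comm.mp hcomp) _
    rw [heq, hT, h0]
  · intro hdvd w hw
    obtain ⟨v, hv, rfl⟩ := Submodule.mem_map.mp hw
    obtain ⟨q, rfl⟩ := mem_oneGenQC.mp hv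
    rw [pairing_eq c a hu a' haa', ← hT]
    apply ctL_of_dvd
    have hfac : p * q.comp (X ^ a') * T = (p * T) * q.comp (X ^ a') := by ring
    rw [hfac]
    exact hdvd.mul_right _

end QCAux

/-- Let `gcd(m,q) = 1`, `gcd(a,m) = 1`, `a'` the residue of `-a` mod `m`, and
`C = F_q[x]·c(x)` a 1-generator QC code of index `l`.  Then `C` is `μ_a`-LCD iff
`gcd(∑ j, c_j(x) c_j(x^{a'}), x^m - 1) = gcd(c_1(x), …, c_l(x), x^m - 1)` (monic gcds,
computing `c_j(x^{a'})` modulo `x^m - 1`), and `C` is `μ_a` self-orthogonal iff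
`∑ j, c_j(x) c_j(x^{a'}) ≡ 0 (mod x^m - 1)`. -/
theorem oneGen_qc_mu_lcd_selfOrth_iff_gcd
    {F : Type*} [Field F] [Fintype F] [DecidableEq F] {l m : ℕ} [NeZero m]
    (hmq : Nat.Coprime m (Fintype.card F))
    (a : ℤ) (ha : Int.gcd a m = 1)
    (a' : ℕ) (ha' : (a' : ℤ) = (-a) % (m : ℤ))
    (c : Fin l → Polynomial F) :
    (oneGenQC m l c ⊓ qcDual ((oneGenQC m l c).map (muQC l m a)) = ⊥ ↔
      gcd (∑ j, c j * ((c j).comp (X ^ a') % (X ^ m - 1))) (X ^ m - 1) =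
        gcd (Finset.univ.gcd c) (X ^ m - 1)) ∧
    (oneGenQC m l c ≤ qcDual ((oneGenQC m l c).map (muQC l m a)) ↔
      (X ^ m - 1) ∣ ∑ j, c j * ((c j).comp (X ^ a') % (X ^ m - 1))) := by
  classical
  -- the integer `a` is invertible mod `m`
  have hu : IsUnit ((a : ZMod m)) := by
    obtain ⟨u, v, huv⟩ := Int.isCoprime_iff_gcd_eq_one.mpr ha
    apply IsUnit.of_mul_eq_one ((u : ZMod m))
    have hcast := congrArg (fun z : ℤ => ((z : ZMod m))) huv
    push_cast at hcast
    rw [ZMod.natCast_self, mul_zero, add_zero] at hcast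
    rw [mul_comm]
    exact hcast
  -- `a'` is `-a` mod `m`
  have haa' : ((a' : ℕ) : ZMod m) = -((a : ℤ) : ZMod m) := by
    have h1 : ((a' : ℤ) : ZMod m) = ((-a % (m : ℤ) : ℤ) : ZMod m) := by rw [ha']
    rw [ZMod.intCast_mod] at h1
    push_cast at h1
    exact h1
  set T := ∑ j, c j * ((c j).comp (X ^ a') % (X ^ m - 1)) with hT
  have hself : oneGenQC m l c ≤ qcDual ((oneGenQC m l c).map (muQC l m a)) ↔
      (X ^ m - 1 : F[X]) ∣ T := by
    constructor
    · intro hle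
      have h1 := hle (QCAux.mem_oneGenQC.mpr ⟨1, rfl⟩)
      rw [QCAux.genMap_mem_dual_iff c a hu a' haa'] at h1
      rw [hT]
      simpa using h1
    · intro hdvd v hv
      obtain ⟨p, rfl⟩ := QCAux.mem_oneGenQC.mp hv
      rw [QCAux.genMap_mem_dual_iff c a hu a' haa']
      exact Dvd.dvd.mul_left hdvd p
  refine ⟨?_, hself⟩
  have hkey : (oneGenQC m l c ⊓ qcDual ((oneGenQC m l c).map (muQC l m a)) = ⊥) ↔
      ∀ p : F[X], (X ^ m - 1 : F[X]) ∣ p * T → ∀ j, (X ^ m - 1 : F[X]) ∣ p * c j := by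
    rw [Submodule.eq_bot_iff]
    constructor
    · intro h p hpT j
      have h0 : QCAux.genMap F m l c p = 0 :=
        h _ (Submodule.mem_inf.mpr ⟨QCAux.mem_oneGenQC.mpr ⟨p, rfl⟩,
          (QCAux.genMap_mem_dual_iff c a hu a' haa' p).mpr hpT⟩)
      exact QCAux.genMap_eq_zero_iff.mp h0 j
    · intro h v hv
      obtain ⟨hv1, hv2⟩ := Submodule.mem_inf.mp hv
      obtain ⟨p, rfl⟩ := QCAux.mem_oneGenQC.mp hv1
      rw [QCAux.genMap_mem_dual_iff c a hu a' haa'] at hv2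
      exact QCAux.genMap_eq_zero_iff.mpr (h p hv2)
  rw [hkey]
  have hGdvd : gcd (Finset.univ.gcd c) (X ^ m - 1 : F[X]) ∣ gcd T (X ^ m - 1 : F[X]) := by
    apply dvd_gcd
    · rw [hT]
      apply Finset.dvd_sum
      intro j _
      exact ((gcd_dvd_left _ _).trans (Finset.gcd_dvd (Finset.mem_univ j))).mul_right _
    · exact gcd_dvd_right _ _
  constructor
  · intro hcond
    refine dvd_antisymm_of_normalize_eq (normalize_gcd _ _) (normalize_gcd _ _) ?_ hGdvd
    set D := gcd T (X ^ m - 1 : F[X]) with hD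
    obtain ⟨p₀, hp₀⟩ := gcd_dvd_right T (X ^ m - 1 : F[X])
    have hNp₀T : (X ^ m - 1 : F[X]) ∣ p₀ * T := by
      obtain ⟨T', hT'⟩ := gcd_dvd_left T (X ^ m - 1 : F[X])
      refine ⟨T', ?_⟩
      calc p₀ * T = p₀ * (gcd T (X ^ m - 1) * T') := by rw [← hT']
        _ = gcd T (X ^ m - 1) * p₀ * T' := by ring
        _ = (X ^ m - 1) * T' := by rw [← hp₀]
    have hj := hcond p₀ hNp₀T
    have hp₀ne : p₀ ≠ 0 := by
      rintro rfl
      rw [mul_zero] at hp₀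
      exact QCAux.NneZero hp₀
    have hDj : ∀ j, D ∣ c j := by
      intro j
      obtain ⟨k, hk⟩ := hj j
      have hcancel : p₀ * c j = p₀ * (D * k) := by
        calc p₀ * c j = (X ^ m - 1) * k := hk
          _ = gcd T (X ^ m - 1) * p₀ * k := by rw [← hp₀]
          _ = p₀ * (D * k) := by rw [hD]; ring
      exact ⟨k, mul_left_cancel₀ hp₀ne hcancel⟩
    exact dvd_gcd (Finset.dvd_gcd fun j _ => hDj j) (gcd_dvd_right _ _)
  · intro heq p hpT j
    have h1 : (X ^ m - 1 : F[X]) ∣ gcd (p * T) (p * (X ^ m - 1)) :=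
      dvd_gcd hpT (dvd_mul_left _ _)
    rw [gcd_mul_left] at h1
    have h2 : (X ^ m - 1 : F[X]) ∣ p * gcd T (X ^ m - 1) :=
      h1.trans ((normalize_associated p).mul_right (gcd T (X ^ m - 1))).dvd
    have hDc : gcd T (X ^ m - 1 : F[X]) ∣ c j := by
      rw [heq]
      exact (gcd_dvd_left _ _).trans (Finset.gcd_dvd (Finset.mem_univ j))
    obtain ⟨k, hk⟩ := hDc
    rw [hk, ← mul_assoc]
    exact h2.mul_right k
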